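/- arXiv:2506.17470 — 4 statements merged into one kernel-verified Lean document; each statement's English description precedes it below -/
import Mathlib

section
/- Let 0 < p < r ≤ 1, set m := r/p > 1, and let (H_i)_{i≥1} be i.i.d. positive-integer-valued random variables with tail ℙ(H > n) = (r−p)/((1−p)m^n − (1−r)) for all integers n ≥ 0. Let y ∈ (0,1), let J be geometric with ℙ(J = j) = y(1−y)^{j−1} (j ≥ 1) independent of (H_i), and set M^y := max_{1 ≤ i ≤ J} H_i. Then for every integer n ≥ 0, ℙ(M^y > n) = (r−p)/(y(1−p)m^n − (y(1−p) − (r−p))). -/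
open MeasureTheory ProbabilityTheory

/-- For the linear-fractional coalescent point process with
`ℙ(H > n) = (r-p)/((1-p) m^n - (1-r))` (`m = r/p > 1`), Bernoulli(y) sampling gives branch
lengths `M^y = max_{1 ≤ i ≤ J} H_i` (J geometric(y), independent of `(H_i)`) with
`ℙ(M^y > n) = (r-p)/(y(1-p) m^n - (y(1-p) - (r-p)))`. -/
theorem stmt_3
    {Ω : Type*} [MeasurableSpace Ω] (P : Measure Ω) [IsProbabilityMeasure P]
    (p r : ℝ) (hp : 0 < p) (hpr : p < r) (hr : r ≤ 1)
    (m : ℝ) (hm : m = r / p) (hm1 : 1 < m)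
    (H : ℕ → Ω → ℕ)
    (hmeas : ∀ i, Measurable (H i))
    (hindep : iIndepFun H P)
    (hident : ∀ i, IdentDistrib (H i) (H 1) P P)
    (hpos : ∀ i ω, 1 ≤ H i ω)
    (htail : ∀ n : ℕ, (P {ω | n < H 1 ω}).toReal = (r - p) / ((1 - p) * m ^ n - (1 - r)))
    (y : ℝ) (hy : y ∈ Set.Ioo (0 : ℝ) 1)
    (J : Ω → ℕ) (hJmeas : Measurable J) (hJpos : ∀ ω, 1 ≤ J ω)
    (hJgeom : ∀ j : ℕ, 1 ≤ j → (P {ω | J ω = j}).toReal = y * (1 - y) ^ (j - 1))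
    (hJindep : IndepFun J (fun ω => fun i => H i ω) P)
    (M : Ω → ℕ) (hM : ∀ ω, M ω = (Finset.Icc 1 (J ω)).sup (fun i => H i ω))
    (n : ℕ) :
    (P {ω | n < M ω}).toReal
      = (r - p) / (y * (1 - p) * m ^ n - (y * (1 - p) - (r - p))) := by
  obtain ⟨hy0, hy1⟩ := hy
  have hp1 : p < 1 := lt_of_lt_of_le hpr hr
  have hmn : (1:ℝ) ≤ m ^ n := one_le_pow₀ hm1.le
  set D : ℝ := (1 - p) * m ^ n - (1 - r) with hDdef
  have hDr : r - p ≤ D := by nlinarith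
  have hD : 0 < D := lt_of_lt_of_le (by linarith) hDr
  set t : ℝ := (r - p) / D with htdef
  have ht0 : 0 < t := div_pos (by linarith) hD
  have ht1 : t ≤ 1 := by rw [div_le_one hD]; exact hDr
  -- q = ℙ(H ≤ n)
  set q : ℝ := (P (H 1 ⁻¹' Set.Iic n)).toReal with hqdef
  have hcompl : H 1 ⁻¹' Set.Iic n = {ω | n < H 1 ω}ᶜ := by
    ext ω; simp [not_lt]
  have hms : MeasurableSet {ω | (n:ℕ) < H 1 ω} := measurableSet_lt measurable_const (hmeas 1)
  have hq : q = 1 - t := by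
    rw [hqdef, hcompl, prob_compl_eq_one_sub hms,
      ENNReal.toReal_sub_of_le prob_le_one ENNReal.one_ne_top, ENNReal.toReal_one,
      htail n]
  have hq0 : 0 ≤ q := ENNReal.toReal_nonneg
  have hq1 : q < 1 := by rw [hq]; linarith
  -- all H i have the same "≤ n" probability
  have hHi : ∀ i, P (H i ⁻¹' Set.Iic n) = P (H 1 ⁻¹' Set.Iic n) :=
    fun i => (hident i).measure_mem_eq measurableSet_Iic
  -- events
  set A : ℕ → Set Ω := fun j => ⋂ i ∈ Finset.Icc 1 j, H i ⁻¹' Set.Iic n with hAdef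
  have hAmeas : ∀ j, MeasurableSet (A j) := fun j =>
    MeasurableSet.biInter (Finset.Icc 1 j).countable_toSet
      (fun i _ => (hmeas i) measurableSet_Iic)
  have hPA : ∀ j, P (A j) = (P (H 1 ⁻¹' Set.Iic n)) ^ j := by
    intro j
    rw [hAdef]
    rw [hindep.meas_biInter (fun i _ => ⟨Set.Iic n, measurableSet_Iic, rfl⟩)]
    rw [Finset.prod_congr rfl (fun i _ => hHi i)]
    simp [Finset.prod_const, Nat.card_Icc]
  have hEA : ∀ j, P (J ⁻¹' {j} ∩ A j) = P (J ⁻¹' {j}) * P (A j) := by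
    intro j
    have hT : MeasurableSet {f : ℕ → ℕ | ∀ i ∈ Finset.Icc 1 j, f i ≤ n} := by
      have : {f : ℕ → ℕ | ∀ i ∈ Finset.Icc 1 j, f i ≤ n}
          = ⋂ i ∈ Finset.Icc 1 j, (fun f : ℕ → ℕ => f i) ⁻¹' Set.Iic n := by
        ext f; simp
      rw [this]
      exact MeasurableSet.biInter (Finset.Icc 1 j).countable_toSet
        (fun i _ => (measurable_pi_apply i) measurableSet_Iic)
    have hAeq : A j = (fun ω => fun i => H i ω) ⁻¹' {f : ℕ → ℕ | ∀ i ∈ Finset.Icc 1 j, f i ≤ n} := by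
      ext ω; simp [hAdef]
    rw [hAeq]
    exact hJindep.measure_inter_preimage_eq_mul _ _ (measurableSet_singleton j) hT
  have hunion : {ω | M ω ≤ n} = ⋃ j, (J ⁻¹' {j} ∩ A j) := by
    ext ω
    simp only [Set.mem_setOf_eq, Set.mem_iUnion, Set.mem_inter_iff, Set.mem_preimage,
      Set.mem_singleton_iff, hAdef, Set.mem_iInter, Set.mem_Iic, hM]
    constructor
    · intro h
      exact ⟨J ω, rfl, fun i hi => le_trans (Finset.le_sup (f := fun i => H i ω) hi) h⟩
    · rintro ⟨j, rfl, h⟩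
      exact Finset.sup_le h
  have hdisj : Pairwise (Function.onFun Disjoint (fun j => J ⁻¹' {j} ∩ A j)) := by
    intro i j hij
    refine Disjoint.mono Set.inter_subset_left Set.inter_subset_left ?_
    rw [Set.disjoint_left]
    rintro ω h1 h2
    exact hij (h1.symm.trans h2)
  have hsum : P {ω | M ω ≤ n} = ∑' j, P (J ⁻¹' {j} ∩ A j) := by
    rw [hunion, measure_iUnion hdisj
      (fun j => ((hJmeas (measurableSet_singleton j)).inter (hAmeas j)))]
  -- pass to reals
  set f : ℕ → ℝ := fun j => (P (J ⁻¹' {j})).toReal * q ^ j with hfdef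
  have hterm : ∀ j, (P (J ⁻¹' {j} ∩ A j)).toReal = f j := by
    intro j
    rw [hEA j, hPA j, ENNReal.toReal_mul, ENNReal.toReal_pow]
  have hsumR : (P {ω | M ω ≤ n}).toReal = ∑' j, f j := by
    rw [hsum, ENNReal.tsum_toReal_eq (fun j => measure_ne_top P _)]
    exact tsum_congr hterm
  -- compute the real series
  have hx0 : 0 ≤ (1 - y) * q := mul_nonneg (by linarith) hq0
  have hx1 : (1 - y) * q < 1 := by nlinarith
  have hgeo : HasSum (fun k : ℕ => (y * q) * ((1 - y) * q) ^ k)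
      (y * q * (1 - (1 - y) * q)⁻¹) :=
    (hasSum_geometric_of_lt_one hx0 hx1).mul_left _
  have hf0 : f 0 = 0 := by
    have h0 : J ⁻¹' ({0} : Set ℕ) = ∅ :=
      Set.eq_empty_iff_forall_notMem.mpr (fun ω h => by
        have := hJpos ω
        simp only [Set.mem_preimage, Set.mem_singleton_iff] at h
        omega)
    simp [hfdef, h0]
  have hfk : ∀ k : ℕ, f (k + 1) = (y * q) * ((1 - y) * q) ^ k := by
    intro k
    have : (P (J ⁻¹' {k + 1})).toReal = y * (1 - y) ^ k := by
      have := hJgeom (k + 1) (by omega)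
      simp only [Nat.add_sub_cancel] at this
      exact this
    rw [hfdef]
    simp only [this, mul_pow, pow_succ]
    ring
  have hfsum : HasSum f (y * q * (1 - (1 - y) * q)⁻¹) := by
    have h1 : HasSum (fun k : ℕ => f (k + 1)) (y * q * (1 - (1 - y) * q)⁻¹) := by
      simpa only [hfk] using hgeo
    have := (hasSum_nat_add_iff (f := f) 1).mp h1
    simpa [hf0] using this
  -- complement
  have hMset : {ω | n < M ω} = {ω | M ω ≤ n}ᶜ := by
    ext ω; simp [not_le]
  have hMmeas : MeasurableSet {ω | M ω ≤ n} := by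
    rw [hunion]
    exact MeasurableSet.iUnion
      (fun j => ((hJmeas (measurableSet_singleton j)).inter (hAmeas j)))
  have hfinal : (P {ω | n < M ω}).toReal = 1 - y * q * (1 - (1 - y) * q)⁻¹ := by
    rw [hMset, prob_compl_eq_one_sub hMmeas,
      ENNReal.toReal_sub_of_le prob_le_one ENNReal.one_ne_top, ENNReal.toReal_one,
      hsumR, hfsum.tsum_eq]
  rw [hfinal, hq]
  have hyd : (0:ℝ) < y + (1 - y) * t := by nlinarith
  have step1 : 1 - y * (1 - t) * (1 - (1 - y) * (1 - t))⁻¹ = t / (y + (1 - y) * t) := by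
    have e1 : (1:ℝ) - (1 - y) * (1 - t) = y + (1 - y) * t := by ring
    rw [e1]
    field_simp
    ring
  have hden2 : (0:ℝ) < y * (1 - p) * m ^ n - (y * (1 - p) - (r - p)) := by
    have e2 : y * (1 - p) * m ^ n - (y * (1 - p) - (r - p))
        = y * D + (1 - y) * (r - p) := by rw [hDdef]; ring
    rw [e2]
    have h1 : 0 < y * D := mul_pos hy0 hD
    have h2 : 0 ≤ (1 - y) * (r - p) := mul_nonneg (by linarith) (by linarith)
    linarith
  rw [step1, div_eq_div_iff hyd.ne' hden2.ne', htdef]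
  have hDne : D ≠ 0 := hD.ne'
  field_simp
  rw [hDdef]
  ring_nf
end

section
/- Let (H_i)_{i≥1} be an i.i.d. sequence of positive-integer-valued random variables and let (G_j)_{j≥1} be an i.i.d. sequence of geometric random variables with ℙ(G = g) = y(1−y)^{g−1} for g ≥ 1 and some y ∈ (0,1), independent of (H_i). Set S_0 := 0, S_j := G_1 + ⋯ + G_j, and define the block maxima M_j := max{H_i : S_{j−1} < i ≤ S_j} for j ≥ 1. Then the sequence (M_j)_{j≥1} is i.i.d. -/
open MeasureTheory ProbabilityTheory

lemma aux_tsum_pi : ∀ (n : ℕ) (c : Fin n → ℕ → ENNReal),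
    ∑' v : Fin n → ℕ, ∏ l, c l (v l) = ∏ l, ∑' x, c l x := by
  intro n
  induction n with
  | zero =>
    intro c
    rw [tsum_eq_single (fun l : Fin 0 => 0) (fun b hb => absurd (Subsingleton.elim b _) hb)]
    simp
  | succ n ih =>
    intro c
    rw [← Equiv.tsum_eq (Fin.consEquiv (fun _ : Fin (n+1) => ℕ))
      (fun v => ∏ l, c l (v l))]
    rw [ENNReal.tsum_prod']
    have : ∀ (x : ℕ) (w : Fin n → ℕ),
        (∏ l, c l ((Fin.consEquiv (fun _ : Fin (n+1) => ℕ)) (x, w) l))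
          = c 0 x * ∏ l : Fin n, c l.succ (w l) := by
      intro x w
      rw [Fin.prod_univ_succ]
      simp [Fin.consEquiv]
    simp_rw [this]
    simp_rw [ENNReal.tsum_mul_left]
    rw [ENNReal.tsum_mul_right, ih (fun l => c l.succ), Fin.prod_univ_succ]

lemma aux_meas_sup {Ω : Type*} {m' : MeasurableSpace Ω} (f : ℕ → Ω → ℕ) (I : Finset ℕ)
    (h : ∀ i ∈ I, Measurable[m'] (f i)) :
    Measurable[m'] fun ω => I.sup fun i => f i ω := by
  classical
  induction I using Finset.induction with
  | empty => simp only [Finset.sup_empty]; exact measurable_const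
  | @insert a s ha ih =>
    simp only [Finset.sup_insert]
    exact Measurable.comp (measurable_of_countable fun p : ℕ × ℕ => p.1 ⊔ p.2)
      ((h _ (Finset.mem_insert_self _ _)).prodMk
        (ih fun i hi => h i (Finset.mem_insert_of_mem hi)))

lemma aux_meas_sum {Ω : Type*} {m' : MeasurableSpace Ω} (f : ℕ → Ω → ℕ) (I : Finset ℕ)
    (h : ∀ i ∈ I, Measurable[m'] (f i)) :
    Measurable[m'] fun ω => ∑ i ∈ I, f i ω := by
  classical
  induction I using Finset.induction with
  | empty => simp only [Finset.sum_empty]; exact measurable_const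
  | @insert a s ha ih =>
    simp only [Finset.sum_insert ha]
    exact Measurable.comp (measurable_of_countable fun p : ℕ × ℕ => p.1 + p.2)
      ((h _ (Finset.mem_insert_self _ _)).prodMk
        (ih fun i hi => h i (Finset.mem_insert_of_mem hi)))

lemma aux_nat_generate : (inferInstance : MeasurableSpace ℕ)
    = MeasurableSpace.generateFrom (Set.range fun k : ℕ => ({k} : Set ℕ)) := by
  refine le_antisymm (fun s _ => ?_) (MeasurableSpace.generateFrom_le ?_)
  · have : s = ⋃ k ∈ s, {k} := by simp
    rw [this]
    exact MeasurableSet.biUnion s.to_countable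
      (fun k _ => MeasurableSpace.measurableSet_generateFrom ⟨k, rfl⟩)
  · rintro t ⟨k, rfl⟩
    exact MeasurableSet.singleton k

lemma aux_comap_generate {Ω : Type*} (f : Ω → ℕ) :
    MeasurableSpace.comap f inferInstance
      = MeasurableSpace.generateFrom {A | ∃ k : ℕ, f ⁻¹' {k} = A} := by
  rw [aux_nat_generate, MeasurableSpace.comap_generateFrom]
  congr 1
  ext A
  constructor
  · rintro ⟨t, ⟨k, rfl⟩, rfl⟩; exact ⟨k, rfl⟩
  · rintro ⟨k, rfl⟩; exact ⟨{k}, ⟨k, rfl⟩, rfl⟩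

/-- If `(H_i)_{i ≥ 1}` are i.i.d. positive-integer-valued and `(G_j)_{j ≥ 1}`
are i.i.d. geometric(y) independent of `(H_i)`, with partial sums `S_j = G_1 + ⋯ + G_j`
and block maxima `M_j = max {H_i : S_{j-1} < i ≤ S_j}`, then `(M_j)_{j ≥ 1}` is i.i.d.
(Here `M j` denotes the `(j+1)`-st block maximum, i.e. the blocks are indexed by `j ≥ 0`.) -/
theorem stmt_4
    {Ω : Type*} [MeasurableSpace Ω] (P : Measure Ω) [IsProbabilityMeasure P]
    (H : ℕ → Ω → ℕ)
    (hHmeas : ∀ i, Measurable (H i))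
    (hHindep : iIndepFun H P)
    (hHident : ∀ i, IdentDistrib (H i) (H 1) P P)
    (hHpos : ∀ i ω, 1 ≤ H i ω)
    (y : ℝ) (hy : y ∈ Set.Ioo (0 : ℝ) 1)
    (G : ℕ → Ω → ℕ)
    (hGmeas : ∀ j, Measurable (G j))
    (hGindep : iIndepFun G P)
    (hGident : ∀ j, IdentDistrib (G j) (G 1) P P)
    (hGpos : ∀ j ω, 1 ≤ G j ω)
    (hGgeom : ∀ g : ℕ, 1 ≤ g → (P {ω | G 1 ω = g}).toReal = y * (1 - y) ^ (g - 1))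
    (hHG : IndepFun (fun ω => fun i => H i ω) (fun ω => fun j => G j ω) P)
    (S : ℕ → Ω → ℕ) (hS : ∀ j ω, S j ω = ∑ l ∈ Finset.Icc 1 j, G l ω)
    (M : ℕ → Ω → ℕ)
    (hM : ∀ j ω, M j ω = (Finset.Ioc (S j ω) (S (j + 1) ω)).sup (fun i => H i ω)) :
    iIndepFun M P ∧ ∀ j, IdentDistrib (M j) (M 0) P P := by
  classical
  set F : ℕ → ENNReal := fun t => P {ω | H 1 ω ≤ t} with hF
  set q : ℕ → ℕ → ENNReal := fun g k => if k = 0 then 0 else F k ^ g - F (k-1) ^ g with hq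
  set μf : ℕ → ENNReal := fun k => ∑' g : ℕ, P {ω | G 1 ω = g} * q g k with hμf
  -- distribution of the sup of H over a finite block
  have hsup_le : ∀ (I : Finset ℕ) (t : ℕ),
      P {ω | I.sup (fun i => H i ω) ≤ t} = F t ^ I.card := by
    intro I t
    have h1 : {ω | I.sup (fun i => H i ω) ≤ t} = ⋂ i ∈ I, H i ⁻¹' Set.Iic t := by
      ext ω; simp [Finset.sup_le_iff, Set.mem_iInter]
    rw [h1, hHindep.meas_biInter
      (fun i _ => ⟨Set.Iic t, (Set.Iic t).to_countable.measurableSet, rfl⟩)]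
    rw [Finset.prod_congr rfl (fun i _ =>
      (hHident i).measure_mem_eq ((Set.Iic t).to_countable.measurableSet))]
    rw [Finset.prod_const]
    rfl
  have hmeas_suple : ∀ (I : Finset ℕ) (t : ℕ),
      MeasurableSet {ω | I.sup (fun i => H i ω) ≤ t} :=
    fun I t => (aux_meas_sup H I fun i _ => hHmeas i) (Set.Iic t).to_countable.measurableSet
  have hsupd : ∀ (I : Finset ℕ), I.Nonempty → ∀ k,
      P {ω | I.sup (fun i => H i ω) = k} = q I.card k := by
    intro I hI k
    match k with
    | 0 =>
      have hempty : {ω | I.sup (fun i => H i ω) = 0} = ∅ := by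
        ext ω
        simp only [Set.mem_setOf_eq, Set.mem_empty_iff_false, iff_false]
        intro h
        obtain ⟨i, hi⟩ := hI
        have h1 := Finset.le_sup (f := fun i => H i ω) hi
        have h2 := hHpos i ω
        have h1' : H i ω ≤ 0 := by simpa [h] using h1
        omega
      rw [hempty]
      simp [hq]
    | (k+1) =>
      have hset : {ω | I.sup (fun i => H i ω) = k+1}
          = {ω | I.sup (fun i => H i ω) ≤ k+1} \ {ω | I.sup (fun i => H i ω) ≤ k} := by
        ext ω
        simp only [Set.mem_setOf_eq, Set.mem_diff]
        omega
      have hsub : {ω | (I.sup fun i => H i ω) ≤ k} ⊆ {ω | (I.sup fun i => H i ω) ≤ k+1} :=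
        fun ω h => Nat.le_succ_of_le h
      rw [hset, measure_diff hsub
        ((hmeas_suple I k).nullMeasurableSet) (measure_ne_top P _), hsup_le, hsup_le]
      simp [hq]
  -- G singleton probabilities
  have hGsingle : ∀ l x, P {ω | G l ω = x} = P {ω | G 1 ω = x} := fun l x =>
    (hGident l).measure_mem_eq (MeasurableSet.singleton x)
  -- independence of block sup events
  have hblocks : ∀ (s : Finset ℕ) (I : ℕ → Finset ℕ) (k : ℕ → ℕ),
      (∀ j ∈ s, ∀ j' ∈ s, j ≠ j' → Disjoint (I j) (I j')) →
      P (⋂ j ∈ s, {ω | (I j).sup (fun i => H i ω) = k j})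
        = ∏ j ∈ s, P {ω | (I j).sup (fun i => H i ω) = k j} := by
    intro s I k
    induction s using Finset.induction with
    | empty => intro _; simp
    | @insert a s ha ih =>
      intro hdisj
      rw [Finset.set_biInter_insert, Finset.prod_insert ha,
        ← ih (fun j hj j' hj' h => hdisj j (Finset.mem_insert_of_mem hj) j'
          (Finset.mem_insert_of_mem hj') h)]
      have hSTdisj : Disjoint ((I a : Set ℕ)) (⋃ j ∈ (s : Set ℕ), (I j : Set ℕ)) := by
        refine Set.disjoint_left.2 fun i hi hmem => ?_
        simp only [Set.mem_iUnion, Finset.mem_coe] at hmem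
        obtain ⟨j, hj, hij⟩ := hmem
        have hne : a ≠ j := fun h => ha (h ▸ hj)
        exact Finset.disjoint_left.1
          (hdisj a (Finset.mem_insert_self a s) j (Finset.mem_insert_of_mem hj) hne) hi hij
      have hind := indep_iSup_of_disjoint
        (m := fun i => MeasurableSpace.comap (H i) inferInstance)
        (fun i => (hHmeas i).comap_le) hHindep.iIndep hSTdisj
      refine (Indep_iff _ _ _).1 hind _ _ ?_ ?_
      · have hmle : ∀ i ∈ I a, Measurable[⨆ i ∈ ((I a : Set ℕ)),
            MeasurableSpace.comap (H i) inferInstance] (H i) := by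
          intro i hi
          exact (Measurable.of_comap_le le_rfl).mono
            (le_iSup₂ (f := fun i (_ : i ∈ (I a : Set ℕ)) =>
              MeasurableSpace.comap (H i) inferInstance) i hi) le_rfl
        exact (aux_meas_sup H (I a) hmle) (MeasurableSet.singleton (k a))
      · refine MeasurableSet.biInter s.countable_toSet fun j hj => ?_
        have hmle : ∀ i ∈ I j, Measurable[⨆ i ∈ (⋃ j ∈ (s : Set ℕ), (I j : Set ℕ)),
            MeasurableSpace.comap (H i) inferInstance] (H i) := by
          intro i hi
          exact (Measurable.of_comap_le le_rfl).mono
            (le_iSup₂ (f := fun i (_ : i ∈ ⋃ j ∈ (s : Set ℕ), (I j : Set ℕ)) =>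
              MeasurableSpace.comap (H i) inferInstance) i
              (Set.mem_biUnion hj hi)) le_rfl
        exact (aux_meas_sup H (I j) hmle) (MeasurableSet.singleton (k j))
  have hIcc : ∀ j : ℕ, Finset.Icc 1 j = (Finset.range j).image (· + 1) := by
    intro j; ext i
    simp only [Finset.mem_Icc, Finset.mem_image, Finset.mem_range]
    constructor
    · intro ⟨h1, h2⟩; exact ⟨i - 1, by omega, by omega⟩
    · rintro ⟨l, hl, rfl⟩; omega
  -- the key per-configuration computation
  have hkey : ∀ (n : ℕ) (s : Finset ℕ), (∀ j ∈ s, j < n) → ∀ (m : ℕ → ℕ) (v : ℕ → ℕ),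
      P ((⋂ j ∈ s, {ω | M j ω = m j}) ∩ ⋂ l ∈ Finset.range n, {ω | G (l+1) ω = v l})
        = (∏ l ∈ Finset.range n, P {ω | G 1 ω = v l}) * ∏ j ∈ s, q (v j) (m j) := by
    intro n s hs m v
    by_cases hv : ∀ l, l < n → 1 ≤ v l
    · set σ : ℕ → ℕ := fun j => ∑ l ∈ Finset.range j, v l with hσ
      have hmono : Monotone σ := fun a b hab =>
        Finset.sum_le_sum_of_subset (Finset.range_subset_range.2 hab)
      have hstep : ∀ j, σ (j+1) = σ j + v j := fun j => Finset.sum_range_succ v j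
      have hS_eq : ∀ ω, (∀ l, l < n → G (l+1) ω = v l) → ∀ j, j ≤ n → S j ω = σ j := by
        intro ω hω j hj
        rw [hS, hIcc j, Finset.sum_image
          (by omega : ∀ a ∈ Finset.range j, ∀ b ∈ Finset.range j, a + 1 = b + 1 → a = b)]
        exact Finset.sum_congr rfl fun l hl =>
          hω l (lt_of_lt_of_le (Finset.mem_range.1 hl) hj)
      have hinter : ((⋂ j ∈ s, {ω | M j ω = m j}) ∩
            ⋂ l ∈ Finset.range n, {ω | G (l+1) ω = v l})
          = (⋂ j ∈ s, {ω | (Finset.Ioc (σ j) (σ (j+1))).sup (fun i => H i ω) = m j})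
            ∩ ⋂ l ∈ Finset.range n, {ω | G (l+1) ω = v l} := by
        ext ω
        simp only [Set.mem_inter_iff, Set.mem_iInter, Set.mem_setOf_eq, Finset.mem_range]
        constructor
        · rintro ⟨h1, h2⟩
          refine ⟨fun j hj => ?_, h2⟩
          rw [← hS_eq ω h2 j (le_of_lt (hs j hj)), ← hS_eq ω h2 (j+1) (hs j hj), ← hM]
          exact h1 j hj
        · rintro ⟨h1, h2⟩
          refine ⟨fun j hj => ?_, h2⟩
          rw [hM, hS_eq ω h2 j (le_of_lt (hs j hj)), hS_eq ω h2 (j+1) (hs j hj)]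
          exact h1 j hj
      have hPB : P (⋂ l ∈ Finset.range n, {ω | G (l+1) ω = v l})
          = ∏ l ∈ Finset.range n, P {ω | G 1 ω = v l} := by
        have himg : (⋂ l ∈ Finset.range n, {ω | G (l+1) ω = v l})
            = ⋂ i ∈ (Finset.range n).image (· + 1), G i ⁻¹' {v (i-1)} := by
          ext ω
          simp only [Set.mem_iInter, Finset.mem_image, Finset.mem_range, Set.mem_preimage,
            Set.mem_singleton_iff, Set.mem_setOf_eq]
          constructor
          · rintro h i ⟨l, hl, rfl⟩
            simpa using h l hl
          · intro h l hl
            simpa using h (l+1) ⟨l, hl, rfl⟩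
        rw [himg, hGindep.meas_biInter
          (fun i _ => ⟨{v (i-1)}, MeasurableSet.singleton _, rfl⟩),
          Finset.prod_image
          (by omega : ∀ a ∈ Finset.range n, ∀ b ∈ Finset.range n, a + 1 = b + 1 → a = b)]
        refine Finset.prod_congr rfl fun l _ => ?_
        show P (G (l+1) ⁻¹' {v (l+1-1)}) = _
        rw [Nat.add_sub_cancel]
        exact hGsingle (l+1) (v l)
      have hdisjI : ∀ j ∈ s, ∀ j' ∈ s, j ≠ j' →
          Disjoint (Finset.Ioc (σ j) (σ (j+1))) (Finset.Ioc (σ j') (σ (j'+1))) := by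
        have key : ∀ j j', j < j' →
            Disjoint (Finset.Ioc (σ j) (σ (j+1))) (Finset.Ioc (σ j') (σ (j'+1))) := by
          intro j j' hjj'
          refine Finset.disjoint_left.2 fun i hi hi' => ?_
          have h1 := (Finset.mem_Ioc.1 hi).2
          have h2 := (Finset.mem_Ioc.1 hi').1
          have h3 := hmono (show j+1 ≤ j' from hjj')
          omega
        intro j hj j' hj' hne
        rcases hne.lt_or_gt with h | h
        · exact key j j' h
        · exact (key j' j h).symm
      have hPA : P (⋂ j ∈ s, {ω | (Finset.Ioc (σ j) (σ (j+1))).sup (fun i => H i ω) = m j})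
          = ∏ j ∈ s, q (v j) (m j) := by
        rw [hblocks s _ m hdisjI]
        refine Finset.prod_congr rfl fun j hj => ?_
        have hvj := hv j (hs j hj)
        have hne : (Finset.Ioc (σ j) (σ (j+1))).Nonempty := by
          rw [Finset.nonempty_Ioc, hstep j]; omega
        rw [hsupd _ hne]
        congr 1
        rw [Nat.card_Ioc, hstep j]
        omega
      have hprei : (⋂ j ∈ s, {ω | (Finset.Ioc (σ j) (σ (j+1))).sup (fun i => H i ω) = m j})
          = (fun ω => fun i => H i ω) ⁻¹'
            (⋂ j ∈ s, {h : ℕ → ℕ | (Finset.Ioc (σ j) (σ (j+1))).sup h = m j}) := by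
        ext ω
        simp only [Set.mem_preimage, Set.mem_iInter, Set.mem_setOf_eq]
      have hpreiG : (⋂ l ∈ Finset.range n, {ω | G (l+1) ω = v l})
          = (fun ω => fun j => G j ω) ⁻¹'
            (⋂ l ∈ Finset.range n, {g : ℕ → ℕ | g (l+1) = v l}) := by
        ext ω
        simp only [Set.mem_preimage, Set.mem_iInter, Set.mem_setOf_eq]
      have hSA : MeasurableSet
          (⋂ j ∈ s, {h : ℕ → ℕ | (Finset.Ioc (σ j) (σ (j+1))).sup h = m j}) := by
        refine MeasurableSet.biInter s.countable_toSet fun j _ => ?_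
        exact (aux_meas_sup (fun i (h : ℕ → ℕ) => h i) _ (fun i _ => measurable_pi_apply i))
          (MeasurableSet.singleton (m j))
      have hSB : MeasurableSet (⋂ l ∈ Finset.range n, {g : ℕ → ℕ | g (l+1) = v l}) := by
        refine MeasurableSet.biInter (Finset.range n).countable_toSet fun l _ => ?_
        have : Measurable fun g : ℕ → ℕ => g (l+1) := measurable_pi_apply (l+1)
        exact this (MeasurableSet.singleton (v l))
      rw [hinter, hprei, hpreiG,
        hHG.measure_inter_preimage_eq_mul _ _ hSA hSB, ← hprei, ← hpreiG, hPA, hPB, mul_comm]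
    · push_neg at hv
      obtain ⟨l, hl, hvl⟩ := hv
      have hGempty : P {ω | G 1 ω = v l} = 0 := by
        have hemp : {ω | G 1 ω = v l} = ∅ := by
          ext ω
          simp only [Set.mem_setOf_eq, Set.mem_empty_iff_false, iff_false]
          have := hGpos 1 ω
          omega
        rw [hemp, measure_empty]
      have hRHS : (∏ l' ∈ Finset.range n, P {ω | G 1 ω = v l'}) = 0 :=
        Finset.prod_eq_zero (Finset.mem_range.2 hl) hGempty
      rw [hRHS, zero_mul]
      have hsub : ((⋂ j ∈ s, {ω | M j ω = m j}) ∩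
            ⋂ l' ∈ Finset.range n, {ω | G (l'+1) ω = v l'})
          ⊆ {ω | G (l+1) ω = v l} := by
        intro ω hω
        have h2 := hω.2
        simp only [Set.mem_iInter, Set.mem_setOf_eq, Finset.mem_range] at h2
        exact h2 l hl
      refine le_antisymm (le_trans (measure_mono hsub) (le_of_eq ?_)) (by simp)
      rw [hGsingle (l+1) (v l)]
      exact hGempty
  -- measurability of S and M
  have hSmeas : ∀ j, Measurable (S j) := by
    intro j
    have hfe : S j = fun ω => ∑ l ∈ Finset.Icc 1 j, G l ω := funext fun ω => hS j ω
    rw [hfe]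
    exact aux_meas_sum G _ fun l _ => hGmeas l
  have hMmeas : ∀ j, Measurable (M j) := by
    intro j
    apply measurable_to_countable'
    intro k
    have hrew : M j ⁻¹' {k} = ⋃ p : ℕ × ℕ, ({ω | S j ω = p.1} ∩ {ω | S (j+1) ω = p.2}
        ∩ {ω | (Finset.Ioc p.1 p.2).sup (fun i => H i ω) = k}) := by
      ext ω
      simp only [Set.mem_preimage, Set.mem_singleton_iff, Set.mem_iUnion, Set.mem_inter_iff,
        Set.mem_setOf_eq]
      constructor
      · intro h
        exact ⟨(S j ω, S (j+1) ω), ⟨rfl, rfl⟩, by rw [← hM]; exact h⟩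
      · rintro ⟨⟨a, b⟩, ⟨h1, h2⟩, h3⟩
        rw [hM, h1, h2]
        exact h3
    rw [hrew]
    refine MeasurableSet.iUnion fun p => ?_
    exact (((hSmeas j) (MeasurableSet.singleton _)).inter
        ((hSmeas (j+1)) (MeasurableSet.singleton _))).inter
      ((aux_meas_sup H _ fun i _ => hHmeas i) (MeasurableSet.singleton _))
  -- total mass of G
  have hGtotal : ∑' x : ℕ, P {ω | G 1 ω = x} = 1 := by
    have huniv : (⋃ x : ℕ, G 1 ⁻¹' {x}) = Set.univ := by
      ext ω; simp
    have hdis : Pairwise (Function.onFun Disjoint fun x : ℕ => G 1 ⁻¹' {x}) := by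
      intro a b hab
      refine Set.disjoint_left.2 fun ω h1 h2 => hab ?_
      simp only [Set.mem_preimage, Set.mem_singleton_iff] at h1 h2
      rw [← h1, ← h2]
    rw [← measure_univ (μ := P), ← huniv,
      measure_iUnion hdis fun x => (hGmeas 1) (MeasurableSet.singleton x)]
    rfl
  -- the master formula
  have master : ∀ (s : Finset ℕ) (m : ℕ → ℕ),
      P (⋂ j ∈ s, {ω | M j ω = m j}) = ∏ j ∈ s, μf (m j) := by
    intro s m
    set n := s.sup id + 1 with hn
    have hsn : ∀ j ∈ s, j < n := fun j hj => Nat.lt_succ_of_le (Finset.le_sup (f := id) hj)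
    set ve : (Fin n → ℕ) → ℕ → ℕ := fun v l => if h : l < n then v ⟨l, h⟩ else 0 with hve
    set Bv : (Fin n → ℕ) → Set Ω :=
      fun v => ⋂ l ∈ Finset.range n, {ω | G (l+1) ω = ve v l} with hBv
    have hveval : ∀ (v : Fin n → ℕ) (l : Fin n), ve v (l : ℕ) = v l := by
      intro v l
      simp only [hve, l.isLt, dif_pos, Fin.eta]
    have hcover : (⋂ j ∈ s, {ω | M j ω = m j})
        = ⋃ v : Fin n → ℕ, ((⋂ j ∈ s, {ω | M j ω = m j}) ∩ Bv v) := by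
      ext ω
      simp only [Set.mem_iUnion, Set.mem_inter_iff]
      constructor
      · intro h
        refine ⟨fun l => G ((l : ℕ) + 1) ω, h, ?_⟩
        simp only [hBv, Set.mem_iInter, Set.mem_setOf_eq, Finset.mem_range]
        intro l hl
        rw [hve]
        simp only [hl, dif_pos]
      · rintro ⟨v, h, _⟩
        exact h
    have hmeasBv : ∀ v, MeasurableSet (Bv v) :=
      fun v => MeasurableSet.biInter (Finset.range n).countable_toSet
        fun l _ => (hGmeas (l+1)) (MeasurableSet.singleton _)
    have hmeasE : MeasurableSet (⋂ j ∈ s, {ω | M j ω = m j}) :=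
      MeasurableSet.biInter s.countable_toSet
        fun j _ => (hMmeas j) (MeasurableSet.singleton _)
    have hdisjBv : Pairwise (Function.onFun Disjoint
        fun v => ((⋂ j ∈ s, {ω | M j ω = m j}) ∩ Bv v)) := by
      intro v w hvw
      refine Set.disjoint_left.2 fun ω h1 h2 => hvw ?_
      funext l
      have e1 : G ((l : ℕ) + 1) ω = ve v (l : ℕ) := by
        have := h1.2
        simp only [hBv, Set.mem_iInter, Set.mem_setOf_eq, Finset.mem_range] at this
        exact this (l : ℕ) l.isLt
      have e2 : G ((l : ℕ) + 1) ω = ve w (l : ℕ) := by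
        have := h2.2
        simp only [hBv, Set.mem_iInter, Set.mem_setOf_eq, Finset.mem_range] at this
        exact this (l : ℕ) l.isLt
      rw [← hveval v l, ← hveval w l, ← e1, ← e2]
    rw [hcover, measure_iUnion hdisjBv (fun v => hmeasE.inter (hmeasBv v))]
    have hterm : ∀ v : Fin n → ℕ, P ((⋂ j ∈ s, {ω | M j ω = m j}) ∩ Bv v)
        = ∏ l : Fin n, (P {ω | G 1 ω = v l}
            * if (l : ℕ) ∈ s then q (v l) (m (l : ℕ)) else 1) := by
      intro v
      rw [hBv]
      rw [hkey n s hsn m (ve v)]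
      have h1 : (∏ j ∈ s, q (ve v j) (m j))
          = ∏ l ∈ Finset.range n, (if l ∈ s then q (ve v l) (m l) else 1) := by
        rw [Finset.prod_ite_mem (Finset.range n) s (fun l => q (ve v l) (m l)),
          Finset.inter_eq_right.2 (fun j hj => Finset.mem_range.2 (hsn j hj))]
      rw [h1, ← Finset.prod_mul_distrib,
        ← Fin.prod_univ_eq_prod_range
          (fun l => P {ω | G 1 ω = ve v l} * if l ∈ s then q (ve v l) (m l) else 1) n]
      exact Finset.prod_congr rfl fun l _ => by rw [hveval v l]
    simp_rw [hterm]
    rw [aux_tsum_pi n (fun l x => P {ω | G 1 ω = x} * if (l : ℕ) ∈ s then q x (m (l : ℕ)) else 1)]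
    have hsum : ∀ l : Fin n,
        (∑' x : ℕ, P {ω | G 1 ω = x} * if (l : ℕ) ∈ s then q x (m (l : ℕ)) else 1)
          = if (l : ℕ) ∈ s then μf (m (l : ℕ)) else 1 := by
      intro l
      by_cases hls : (l : ℕ) ∈ s
      · simp only [hls, if_true]
        rfl
      · simp only [hls, if_false, mul_one]
        exact hGtotal
    rw [Finset.prod_congr rfl (fun l _ => hsum l),
      Fin.prod_univ_eq_prod_range (fun l => if l ∈ s then μf (m l) else 1) n,
      Finset.prod_ite_mem (Finset.range n) s (fun l => μf (m l)),
      Finset.inter_eq_right.2 (fun j hj => Finset.mem_range.2 (hsn j hj))]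
  -- single marginals
  have hsingle : ∀ j k, P {ω | M j ω = k} = μf k := by
    intro j k
    have h := master {j} (fun _ => k)
    simpa using h
  constructor
  · rw [iIndepFun_iff_iIndep]
    refine iIndepSets.iIndep (fun j => (hMmeas j).comap_le)
      (fun j => {A | ∃ k : ℕ, M j ⁻¹' {k} = A}) ?_ (fun j => aux_comap_generate (M j)) ?_
    · intro j
      rintro A ⟨k, rfl⟩ B ⟨k', rfl⟩ hAB
      obtain ⟨ω, h1, h2⟩ := hAB
      simp only [Set.mem_preimage, Set.mem_singleton_iff] at h1 h2
      have hkk : k = k' := by rw [← h1, ← h2]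
      subst hkk
      rw [Set.inter_self]
      exact ⟨k, rfl⟩
    · rw [iIndepSets_iff]
      intro s f hf
      choose k hk using hf
      set m : ℕ → ℕ := fun j => if h : j ∈ s then k j h else 0 with hm'
      have hfs : ∀ j (hj : j ∈ s), f j = {ω | M j ω = m j} := by
        intro j hj
        rw [← hk j hj]
        simp only [hm', dif_pos hj]
        rfl
      have e1 : (⋂ i ∈ s, f i) = ⋂ j ∈ s, {ω | M j ω = m j} :=
        Set.iInter₂_congr hfs
      rw [e1, master s m]
      exact Finset.prod_congr rfl fun j hj => by rw [hfs j hj, hsingle j (m j)]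
  · intro j
    refine ⟨(hMmeas j).aemeasurable, (hMmeas 0).aemeasurable, ?_⟩
    refine Measure.ext_of_singleton fun k => ?_
    rw [Measure.map_apply (hMmeas j) (MeasurableSet.singleton k),
      Measure.map_apply (hMmeas 0) (MeasurableSet.singleton k)]
    exact (hsingle j k).trans (hsingle 0 k).symm
end

section
/- Let (H_i)_{i≥1} be i.i.d. positive-integer-valued random variables, (G_j)_{j≥1} i.i.d. geometric(y) with ℙ(G = g) = y(1−y)^{g−1} (g ≥ 1), y ∈ (0,1), independent of (H_i). Set S_0 := 0, S_j := G_1 + ⋯ + G_j, and M_j := max{H_i : S_{j−1} < i ≤ S_j}. Let T ≥ 1 be an integer with 0 < ℙ(M_1 ≤ T) < 1. Then for every integer n ≥ 1 and every x_1, …, x_{n−1} ∈ {1, …, T}: ℙ(M_j = x_j for all 1 ≤ j ≤ n−1, and M_n > T) = ℙ(M_1 > T) · ∏_{j=1}^{n−1} ℙ(M_1 = x_j). -/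
open MeasureTheory ProbabilityTheory

lemma aux_all_meas {ι : Type*} [Finite ι] (s : Set (ι → ℕ)) : MeasurableSet s := by
  have hsing : ∀ v : ι → ℕ, MeasurableSet ({v} : Set (ι → ℕ)) := by
    intro v
    have : ({v} : Set (ι → ℕ)) = ⋂ i, (fun u : ι → ℕ => u i) ⁻¹' {v i} := by
      ext u; simp [funext_iff, eq_comm]
    rw [this]
    exact MeasurableSet.iInter fun i => (measurable_pi_apply i) (measurableSet_singleton _)
  have : s = ⋃ v ∈ s, {v} := by simp
  rw [this]
  exact MeasurableSet.biUnion s.to_countable fun v _ => hsing v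

lemma aux_tsum_pi_s5 : ∀ (m : ℕ) (f : Fin m → ℕ → ENNReal),
    ∑' g : Fin m → ℕ, ∏ j, f j (g j) = ∏ j, ∑' k, f j k := by
  intro m
  induction m with
  | zero =>
    intro f
    simp only [Finset.univ_eq_empty, Finset.prod_empty]
    exact tsum_eq_single (fun j => j.elim0) (fun b hb => absurd (Subsingleton.elim b _) hb)
  | succ m ih =>
    intro f
    rw [← Equiv.tsum_eq (Fin.consEquiv (fun _ : Fin (m+1) => ℕ))]
    have : ∀ p : ℕ × (Fin m → ℕ),
        (∏ j, f j ((Fin.consEquiv (fun _ : Fin (m+1) => ℕ)) p j))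
          = f 0 p.1 * ∏ j : Fin m, f j.succ (p.2 j) := by
      intro p
      rw [Fin.prod_univ_succ]
      simp [Fin.consEquiv]
    simp_rw [this]
    rw [ENNReal.tsum_prod' (f := fun p : ℕ × (Fin m → ℕ) => f 0 p.1 * ∏ j : Fin m, f j.succ (p.2 j))]
    simp_rw [ENNReal.tsum_mul_left, ENNReal.tsum_mul_right]
    rw [ih (fun j => f j.succ), Fin.prod_univ_succ]

section Blocks
variable {Ω : Type*} [MeasurableSpace Ω] (P : Measure Ω) [IsProbabilityMeasure P]
  (H : ℕ → Ω → ℕ)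

lemma aux_sup_le_prob (hHindep : iIndepFun H P)
    (hHmeas : ∀ i, Measurable (H i)) (hHident : ∀ i, IdentDistrib (H i) (H 1) P P)
    (a b t : ℕ) :
    P {ω | (Finset.Ioc a b).sup (fun i => H i ω) ≤ t}
      = P {ω | H 1 ω ≤ t} ^ (b - a) := by
  have h1 : {ω | (Finset.Ioc a b).sup (fun i => H i ω) ≤ t}
      = ⋂ i ∈ Finset.Ioc a b, H i ⁻¹' Set.Iic t := by
    ext ω; simp [Finset.sup_le_iff, Set.mem_iInter]
  rw [h1, hHindep.measure_inter_preimage_eq_mul (Finset.Ioc a b)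
    (sets := fun _ => Set.Iic t) (fun i _ => measurableSet_Iic)]
  have h2 : ∀ i, P (H i ⁻¹' Set.Iic t) = P {ω | H 1 ω ≤ t} := by
    intro i
    have := (hHident i).measure_mem_eq (s := Set.Iic t) measurableSet_Iic
    simpa [Set.preimage, Set.Iic] using this
  rw [Finset.prod_congr rfl fun i _ => h2 i, Finset.prod_const, Nat.card_Ioc]

lemma aux_sup_event_meas (hHmeas : ∀ i, Measurable (H i)) (a b t : ℕ) :
    MeasurableSet {ω | (Finset.Ioc a b).sup (fun i => H i ω) ≤ t} := by
  have h1 : {ω | (Finset.Ioc a b).sup (fun i => H i ω) ≤ t}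
      = ⋂ i ∈ Finset.Ioc a b, H i ⁻¹' Set.Iic t := by
    ext ω; simp [Finset.sup_le_iff, Set.mem_iInter]
  rw [h1]
  exact MeasurableSet.biInter (Finset.Ioc a b).countable_toSet
    fun i _ => (hHmeas i) measurableSet_Iic

lemma aux_sup_eq_prob (hHindep : iIndepFun H P)
    (hHmeas : ∀ i, Measurable (H i)) (hHident : ∀ i, IdentDistrib (H i) (H 1) P P)
    (a b x : ℕ) (hx : 1 ≤ x) :
    P {ω | (Finset.Ioc a b).sup (fun i => H i ω) = x}
      = P {ω | H 1 ω ≤ x} ^ (b - a) - P {ω | H 1 ω ≤ x - 1} ^ (b - a) := by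
  have h1 : {ω | (Finset.Ioc a b).sup (fun i => H i ω) = x}
      = {ω | (Finset.Ioc a b).sup (fun i => H i ω) ≤ x}
        \ {ω | (Finset.Ioc a b).sup (fun i => H i ω) ≤ x - 1} := by
    ext ω; simp only [Set.mem_setOf_eq, Set.mem_diff]; omega
  have hsub : {ω | (Finset.Ioc a b).sup (fun i => H i ω) ≤ x - 1}
      ⊆ {ω | (Finset.Ioc a b).sup (fun i => H i ω) ≤ x} := fun ω h => le_trans h (Nat.sub_le x 1)
  rw [h1, measure_diff hsub
    ((aux_sup_event_meas H hHmeas a b (x - 1)).nullMeasurableSet) (measure_ne_top P _),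
    aux_sup_le_prob P H hHindep hHmeas hHident,
    aux_sup_le_prob P H hHindep hHmeas hHident]

lemma aux_sup_gt_prob (hHindep : iIndepFun H P)
    (hHmeas : ∀ i, Measurable (H i)) (hHident : ∀ i, IdentDistrib (H i) (H 1) P P)
    (a b t : ℕ) :
    P {ω | t < (Finset.Ioc a b).sup (fun i => H i ω)}
      = 1 - P {ω | H 1 ω ≤ t} ^ (b - a) := by
  have h1 : {ω | t < (Finset.Ioc a b).sup (fun i => H i ω)}
      = {ω | (Finset.Ioc a b).sup (fun i => H i ω) ≤ t}ᶜ := by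
    ext ω; simp only [Set.mem_setOf_eq, Set.mem_compl_iff, not_le]
  rw [h1, prob_compl_eq_one_sub (aux_sup_event_meas H hHmeas a b t),
    aux_sup_le_prob P H hHindep hHmeas hHident]

end Blocks

lemma aux_factor {Ω : Type*} [MeasurableSpace Ω] (P : Measure Ω) [IsProbabilityMeasure P]
    (H : ℕ → Ω → ℕ) (hHmeas : ∀ i, Measurable (H i))
    (hHindep : iIndepFun H P)
    (c : ℕ → ℕ) (hc : Monotone c) (p : ℕ → ℕ → Prop) :
    ∀ m : ℕ,
      P {ω | ∀ j ∈ Finset.Icc 1 m, p j ((Finset.Ioc (c (j-1)) (c j)).sup (fun i => H i ω))}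
        = ∏ j ∈ Finset.Icc 1 m,
            P {ω | p j ((Finset.Ioc (c (j-1)) (c j)).sup (fun i => H i ω))} := by
  intro m
  induction m with
  | zero => simp
  | succ m ih =>
    set S : Finset ℕ := Finset.Iic (c m) with hSdef
    set T : Finset ℕ := Finset.Ioc (c m) (c (m+1)) with hTdef
    have hST : Disjoint S T := by
      rw [Finset.disjoint_left]; intro i hi hi'
      simp only [hSdef, Finset.mem_Iic] at hi
      simp only [hTdef, Finset.mem_Ioc] at hi'
      omega
    have hindep := hHindep.indepFun_finset S T hST hHmeas
    set extS : (↥S → ℕ) → (ℕ → ℕ) :=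
      fun v i => if h : i ∈ S then v ⟨i, h⟩ else 0 with hextS
    set extT : (↥T → ℕ) → (ℕ → ℕ) :=
      fun v i => if h : i ∈ T then v ⟨i, h⟩ else 0 with hextT
    set QA : Set (↥S → ℕ) :=
      {v | ∀ j ∈ Finset.Icc 1 m, p j ((Finset.Ioc (c (j-1)) (c j)).sup (extS v))} with hQA
    set QB : Set (↥T → ℕ) :=
      {v | p (m+1) ((Finset.Ioc (c m) (c (m+1))).sup (extT v))} with hQB
    have hsupS : ∀ ω, ∀ j ∈ Finset.Icc 1 m,
        (Finset.Ioc (c (j-1)) (c j)).sup (extS (fun i : ↥S => H i ω))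
          = (Finset.Ioc (c (j-1)) (c j)).sup (fun i => H i ω) := by
      intro ω j hj
      refine Finset.sup_congr rfl ?_
      intro i hi
      have hiS : i ∈ S := by
        simp only [hSdef, Finset.mem_Iic]
        have h2 := (Finset.mem_Ioc.mp hi).2
        have hjm : c j ≤ c m := hc (Finset.mem_Icc.mp hj).2
        omega
      simp [hextS, hiS]
    have hsupT : ∀ ω,
        (Finset.Ioc (c m) (c (m+1))).sup (extT (fun i : ↥T => H i ω))
          = (Finset.Ioc (c m) (c (m+1))).sup (fun i => H i ω) := by
      intro ω
      refine Finset.sup_congr rfl ?_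
      intro i hi
      have hiT : i ∈ T := by rw [hTdef]; exact hi
      simp [hextT, hiT]
    have hA : ((fun a (i : ↥S) => H i a) ⁻¹' QA)
        = {ω | ∀ j ∈ Finset.Icc 1 m,
            p j ((Finset.Ioc (c (j-1)) (c j)).sup (fun i => H i ω))} := by
      ext ω
      simp only [Set.mem_preimage, hQA, Set.mem_setOf_eq]
      exact forall₂_congr fun j hj => by rw [hsupS ω j hj]
    have hB : ((fun a (i : ↥T) => H i a) ⁻¹' QB)
        = {ω | p (m+1) ((Finset.Ioc (c m) (c (m+1))).sup (fun i => H i ω))} := by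
      ext ω
      simp only [Set.mem_preimage, hQB, Set.mem_setOf_eq]
      rw [hsupT ω]
    have hsplit : {ω | ∀ j ∈ Finset.Icc 1 (m+1),
          p j ((Finset.Ioc (c (j-1)) (c j)).sup (fun i => H i ω))}
        = ({ω | ∀ j ∈ Finset.Icc 1 m,
              p j ((Finset.Ioc (c (j-1)) (c j)).sup (fun i => H i ω))}
            ∩ {ω | p (m+1) ((Finset.Ioc (c m) (c (m+1))).sup (fun i => H i ω))}) := by
      ext ω
      simp only [Set.mem_setOf_eq, Set.mem_inter_iff, Finset.mem_Icc]
      constructor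
      · intro h
        refine ⟨fun j hj => h j (by omega), ?_⟩
        have := h (m+1) (by omega)
        simpa using this
      · rintro ⟨h1, h2⟩ j hj
        rcases Nat.lt_or_ge j (m+1) with hlt | hge
        · exact h1 j (by omega)
        · have : j = m + 1 := by omega
          subst this
          simpa using h2
    have key := hindep.measure_inter_preimage_eq_mul QA QB (aux_all_meas QA) (aux_all_meas QB)
    rw [hA, hB] at key
    rw [hsplit, key, ih, Finset.prod_Icc_succ_top (Nat.le_add_left 1 m)]
    norm_num

lemma aux_meas_nat (s : Set ℕ) : MeasurableSet s := s.to_countable.measurableSet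

lemma aux_sup_measurable (s : Finset ℕ) : Measurable (fun u : ℕ → ℕ => s.sup u) := by
  have h : (fun u : ℕ → ℕ => s.sup u)
      = (fun v : ↥s → ℕ => s.attach.sup (fun i => v i)) ∘ (fun u (i : ↥s) => u i) := by
    funext u
    simp only [Function.comp_apply]
    rw [← Finset.sup_attach]
  rw [h]
  exact Measurable.comp (fun t _ => aux_all_meas _)
    (measurable_pi_lambda _ fun i => measurable_pi_apply (i : ℕ))

lemma aux_M1 {Ω : Type*} [MeasurableSpace Ω] (P : Measure Ω) [IsProbabilityMeasure P]
    (H : ℕ → Ω → ℕ) (hHmeas : ∀ i, Measurable (H i))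
    (G : ℕ → Ω → ℕ) (hGmeas : ∀ j, Measurable (G j))
    (hHG : IndepFun (fun ω => fun i => H i ω) (fun ω => fun j => G j ω) P)
    (S : ℕ → Ω → ℕ) (hS : ∀ j ω, S j ω = ∑ l ∈ Finset.Icc 1 j, G l ω)
    (M : ℕ → Ω → ℕ)
    (hM : ∀ j, 1 ≤ j → ∀ ω, M j ω = (Finset.Ioc (S (j - 1) ω) (S j ω)).sup (fun i => H i ω))
    (p : ℕ → Prop) :
    P {ω | p (M 1 ω)}
      = ∑' k : ℕ, P {ω | p ((Finset.Ioc 0 k).sup (fun i => H i ω))} * P {ω | G 1 ω = k} := by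
  have hM1 : ∀ ω, M 1 ω = (Finset.Ioc 0 (G 1 ω)).sup (fun i => H i ω) := by
    intro ω
    rw [hM 1 le_rfl ω]
    have h0 : S 0 ω = 0 := by rw [hS]; simp
    have h1 : S 1 ω = G 1 ω := by rw [hS]; simp
    rw [show (1:ℕ) - 1 = 0 from rfl, h0, h1]
  have hpart : {ω | p (M 1 ω)}
      = ⋃ k : ℕ, ({ω | p ((Finset.Ioc 0 k).sup (fun i => H i ω))} ∩ {ω | G 1 ω = k}) := by
    ext ω
    simp only [Set.mem_setOf_eq, Set.mem_iUnion, Set.mem_inter_iff]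
    constructor
    · intro h
      exact ⟨G 1 ω, by rwa [hM1 ω] at h, rfl⟩
    · rintro ⟨k, h1, h2⟩
      rw [hM1 ω, h2]
      exact h1
  have hmeasB : ∀ k : ℕ, MeasurableSet {ω | p ((Finset.Ioc 0 k).sup (fun i => H i ω))} := by
    intro k
    have : {ω | p ((Finset.Ioc 0 k).sup (fun i => H i ω))}
        = (fun ω => fun i => H i ω) ⁻¹' {u : ℕ → ℕ | p ((Finset.Ioc 0 k).sup u)} := rfl
    rw [this]
    exact (measurable_pi_lambda _ hHmeas) (aux_sup_measurable _ (aux_meas_nat _))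
  have hmeasC : ∀ k : ℕ, MeasurableSet {ω | G 1 ω = k} := by
    intro k
    exact (hGmeas 1) (measurableSet_singleton k)
  rw [hpart, measure_iUnion ?_ (fun k => (hmeasB k).inter (hmeasC k))]
  · congr 1
    funext k
    have hm : MeasurableSet {u : ℕ → ℕ | u 1 = k} := by
      have h : {u : ℕ → ℕ | u 1 = k} = (fun u : ℕ → ℕ => u 1) ⁻¹' {k} := rfl
      rw [h]; exact measurable_pi_apply 1 (measurableSet_singleton k)
    exact hHG.measure_inter_preimage_eq_mul
      {u : ℕ → ℕ | p ((Finset.Ioc 0 k).sup u)} {u : ℕ → ℕ | u 1 = k}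
      (aux_sup_measurable _ (aux_meas_nat _)) hm
  · intro k k' hkk'
    simp only [Set.disjoint_left]
    rintro ω ⟨-, h2⟩ ⟨-, h2'⟩
    exact hkk' (h2 ▸ h2' ▸ rfl)


/-- For block maxima `M_j` (over i.i.d. geometric(y)-sized blocks) of i.i.d.
positive-integer-valued `(H_i)`, with `0 < ℙ(M_1 ≤ T) < 1`, one has for `x_1, …, x_{n-1} ∈
{1, …, T}`: `ℙ(M_j = x_j for 1 ≤ j ≤ n-1, M_n > T) = ℙ(M_1 > T) ∏_{j=1}^{n-1} ℙ(M_1 = x_j)`. -/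
theorem stmt_5
    {Ω : Type*} [MeasurableSpace Ω] (P : Measure Ω) [IsProbabilityMeasure P]
    (H : ℕ → Ω → ℕ)
    (hHmeas : ∀ i, Measurable (H i))
    (hHindep : iIndepFun H P)
    (hHident : ∀ i, IdentDistrib (H i) (H 1) P P)
    (hHpos : ∀ i ω, 1 ≤ H i ω)
    (y : ℝ) (hy : y ∈ Set.Ioo (0 : ℝ) 1)
    (G : ℕ → Ω → ℕ)
    (hGmeas : ∀ j, Measurable (G j))
    (hGindep : iIndepFun G P)
    (hGident : ∀ j, IdentDistrib (G j) (G 1) P P)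
    (hGpos : ∀ j ω, 1 ≤ G j ω)
    (hGgeom : ∀ g : ℕ, 1 ≤ g → (P {ω | G 1 ω = g}).toReal = y * (1 - y) ^ (g - 1))
    (hHG : IndepFun (fun ω => fun i => H i ω) (fun ω => fun j => G j ω) P)
    (S : ℕ → Ω → ℕ) (hS : ∀ j ω, S j ω = ∑ l ∈ Finset.Icc 1 j, G l ω)
    (M : ℕ → Ω → ℕ)
    (hM : ∀ j, 1 ≤ j → ∀ ω, M j ω = (Finset.Ioc (S (j - 1) ω) (S j ω)).sup (fun i => H i ω))
    (T : ℕ) (hT : 1 ≤ T)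
    (hT0 : 0 < P {ω | M 1 ω ≤ T}) (hT1 : P {ω | M 1 ω ≤ T} < 1)
    (n : ℕ) (hn : 1 ≤ n)
    (x : ℕ → ℕ) (hx : ∀ j ∈ Finset.Icc 1 (n - 1), x j ∈ Finset.Icc 1 T) :
    P {ω | (∀ j ∈ Finset.Icc 1 (n - 1), M j ω = x j) ∧ T < M n ω}
      = P {ω | T < M 1 ω} * ∏ j ∈ Finset.Icc 1 (n - 1), P {ω | M 1 ω = x j} := by
  obtain ⟨m, rfl⟩ : ∃ m, n = m + 1 := ⟨n - 1, by omega⟩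
  simp only [Nat.add_sub_cancel] at hx ⊢
  -- notation
  set F : ℕ → ENNReal := fun t => P {ω | H 1 ω ≤ t} with hF
  set γ : ℕ → ENNReal := fun k => P {ω | G 1 ω = k} with hγ
  set q : ℕ → ℕ → ENNReal := fun k t => F t ^ k - F (t - 1) ^ k with hq
  set r : ℕ → ENNReal := fun k => 1 - F T ^ k with hr
  -- tuple apparatus
  set gh : (Fin (m+1) → ℕ) → ℕ → ℕ :=
    fun g i => if h : i - 1 < m + 1 then g ⟨i - 1, h⟩ else 0 with hgh
  set σ : (Fin (m+1) → ℕ) → ℕ → ℕ := fun g j => ∑ l ∈ Finset.Icc 1 j, gh g l with hσ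
  have hghfin : ∀ (g : Fin (m+1) → ℕ) (j : Fin (m+1)), gh g ((j : ℕ) + 1) = g j := by
    intro g j
    simp only [hgh, Nat.add_sub_cancel]
    rw [dif_pos j.isLt]
  have hσmono : ∀ g, Monotone (σ g) := by
    intro g a b hab
    exact Finset.sum_le_sum_of_subset (Finset.Icc_subset_Icc_right hab)
  have hσstep : ∀ g j, 1 ≤ j → σ g j = σ g (j-1) + gh g j := by
    intro g j hj
    obtain ⟨j', rfl⟩ : ∃ j', j = j' + 1 := ⟨j - 1, by omega⟩
    simp only [hσ, Nat.add_sub_cancel]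
    rw [Finset.sum_Icc_succ_top (by omega)]
  have hσdiff : ∀ g j, 1 ≤ j → σ g j - σ g (j-1) = gh g j := by
    intro g j hj; rw [hσstep g j hj]; omega
  set A : (Fin (m+1) → ℕ) → Set Ω :=
    fun g => {ω | ∀ i ∈ Finset.Icc 1 (m+1), G i ω = gh g i} with hA
  set B : (Fin (m+1) → ℕ) → Set Ω :=
    fun g => {ω | (∀ j ∈ Finset.Icc 1 m,
        (Finset.Ioc (σ g (j-1)) (σ g j)).sup (fun i => H i ω) = x j)
      ∧ T < (Finset.Ioc (σ g m) (σ g (m+1))).sup (fun i => H i ω)} with hB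
  -- on A g the M's are the block sups
  have hkey : ∀ g ω, ω ∈ A g → ∀ j, 1 ≤ j → j ≤ m + 1 →
      M j ω = (Finset.Ioc (σ g (j-1)) (σ g j)).sup (fun i => H i ω) := by
    intro g ω hω j hj1 hj2
    have hSσ : ∀ j', j' ≤ m + 1 → S j' ω = σ g j' := by
      intro j' hj'
      rw [hS, hσ]
      refine Finset.sum_congr rfl ?_
      intro l hl
      exact hω l (Finset.mem_Icc.mpr ⟨(Finset.mem_Icc.mp hl).1, by
        have := (Finset.mem_Icc.mp hl).2; omega⟩)
    rw [hM j hj1 ω, hSσ (j-1) (by omega), hSσ j hj2]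
  -- partition of the event
  have hE : {ω | (∀ j ∈ Finset.Icc 1 m, M j ω = x j) ∧ T < M (m+1) ω}
      = ⋃ g : Fin (m+1) → ℕ, (B g ∩ A g) := by
    ext ω
    simp only [Set.mem_setOf_eq, Set.mem_iUnion, Set.mem_inter_iff]
    constructor
    · rintro ⟨h1, h2⟩
      set g0 : Fin (m+1) → ℕ := fun j => G ((j : ℕ) + 1) ω with hg0
      have hAg : ω ∈ A g0 := by
        simp only [hA, Set.mem_setOf_eq]
        intro i hi
        have hi' := Finset.mem_Icc.mp hi
        simp only [hgh, hg0]
        rw [dif_pos (by omega : i - 1 < m + 1)]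
        have h11 : i - 1 + 1 = i := by omega
        simp only [h11]
      refine ⟨g0, ?_, hAg⟩
      simp only [hB, Set.mem_setOf_eq]
      constructor
      · intro j hj
        have hj' := Finset.mem_Icc.mp hj
        rw [← hkey g0 ω hAg j hj'.1 (by omega)]
        exact h1 j hj
      · have := hkey g0 ω hAg (m+1) (by omega) le_rfl
        rw [show (m + 1) - 1 = m from rfl] at this
        rw [← this]
        exact h2
    · rintro ⟨g, hBg, hAg⟩
      simp only [hB, Set.mem_setOf_eq] at hBg
      constructor
      · intro j hj
        have hj' := Finset.mem_Icc.mp hj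
        rw [hkey g ω hAg j hj'.1 (by omega)]
        exact hBg.1 j hj
      · rw [hkey g ω hAg (m+1) (by omega) le_rfl,
          show (m + 1) - 1 = m from rfl]
        exact hBg.2
  -- preimage descriptions & measurability
  set SB : (Fin (m+1) → ℕ) → Set (ℕ → ℕ) := fun g =>
    {u | (∀ j ∈ Finset.Icc 1 m, (Finset.Ioc (σ g (j-1)) (σ g j)).sup u = x j)
      ∧ T < (Finset.Ioc (σ g m) (σ g (m+1))).sup u} with hSB
  set SA : (Fin (m+1) → ℕ) → Set (ℕ → ℕ) := fun g =>
    {u | ∀ i ∈ Finset.Icc 1 (m+1), u i = gh g i} with hSA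
  have hSBmeas : ∀ g, MeasurableSet (SB g) := by
    intro g
    have h1 : SB g = (⋂ j ∈ Finset.Icc 1 m,
        (fun u : ℕ → ℕ => (Finset.Ioc (σ g (j-1)) (σ g j)).sup u) ⁻¹' {x j})
        ∩ ((fun u : ℕ → ℕ => (Finset.Ioc (σ g m) (σ g (m+1))).sup u) ⁻¹' Set.Ioi T) := by
      ext u
      simp [hSB, Set.mem_iInter]
    rw [h1]
    exact (MeasurableSet.biInter (Finset.Icc 1 m).countable_toSet
        (fun j _ => aux_sup_measurable _ (aux_meas_nat _))).inter
      (aux_sup_measurable _ (aux_meas_nat _))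
  have hSAmeas : ∀ g, MeasurableSet (SA g) := by
    intro g
    have h1 : SA g = ⋂ i ∈ Finset.Icc 1 (m+1), (fun u : ℕ → ℕ => u i) ⁻¹' {gh g i} := by
      ext u; simp [hSA, Set.mem_iInter]
    rw [h1]
    exact MeasurableSet.biInter (Finset.Icc 1 (m+1)).countable_toSet
      (fun i _ => (measurable_pi_apply i) (measurableSet_singleton _))
  have hBpre : ∀ g, B g = (fun ω => fun i => H i ω) ⁻¹' SB g := fun g => rfl
  have hApre : ∀ g, A g = (fun ω => fun j => G j ω) ⁻¹' SA g := fun g => rfl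
  have hBmeas : ∀ g, MeasurableSet (B g) := fun g => by
    rw [hBpre]; exact (measurable_pi_lambda _ hHmeas) (hSBmeas g)
  have hAmeas : ∀ g, MeasurableSet (A g) := fun g => by
    rw [hApre]; exact (measurable_pi_lambda _ hGmeas) (hSAmeas g)
  have hdisj : Pairwise (Function.onFun Disjoint (fun g => B g ∩ A g)) := by
    intro g g' hgg'
    refine Set.disjoint_left.mpr ?_
    rintro ω ⟨-, hAg⟩ ⟨-, hAg'⟩
    refine hgg' ?_
    funext j
    have hjlt := j.isLt
    have h1 := hAg ((j:ℕ)+1) (Finset.mem_Icc.mpr ⟨by omega, by omega⟩)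
    have h2 := hAg' ((j:ℕ)+1) (Finset.mem_Icc.mpr ⟨by omega, by omega⟩)
    rw [← hghfin g j, ← hghfin g' j, ← h1, ← h2]
  rw [hE, measure_iUnion hdisj (fun g => (hBmeas g).inter (hAmeas g))]
  -- per-tuple term
  set f : ℕ → ℕ → ENNReal :=
    fun j k => γ k * (if j ≤ m then q k (x j) else r k) with hf
  have hterm : ∀ g, P (B g ∩ A g) = ∏ j ∈ Finset.Icc 1 (m+1), f j (gh g j) := by
    intro g
    have hsplit : P (B g ∩ A g) = P (B g) * P (A g) := by
      rw [hBpre, hApre]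
      exact hHG.measure_inter_preimage_eq_mul _ _ (hSBmeas g) (hSAmeas g)
    have hPA : P (A g) = ∏ i ∈ Finset.Icc 1 (m+1), γ (gh g i) := by
      have hAint : A g = ⋂ i ∈ Finset.Icc 1 (m+1), G i ⁻¹' {gh g i} := by
        ext ω; simp [hA, Set.mem_iInter]
      rw [hAint, hGindep.measure_inter_preimage_eq_mul (Finset.Icc 1 (m+1))
        (sets := fun i => {gh g i}) (fun i _ => measurableSet_singleton _)]
      refine Finset.prod_congr rfl ?_
      intro i _
      have := (hGident i).measure_mem_eq (s := {gh g i}) (measurableSet_singleton _)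
      simpa [hγ, Set.preimage] using this
    have hPB : P (B g) = ∏ j ∈ Finset.Icc 1 (m+1),
        (if j ≤ m then q (gh g j) (x j) else r (gh g j)) := by
      set p0 : ℕ → ℕ → Prop := fun k j => if j ≤ m then k = x j else T < k with hp0
      have hBfac : B g = {ω | ∀ j ∈ Finset.Icc 1 (m+1),
          p0 ((Finset.Ioc (σ g (j-1)) (σ g j)).sup (fun i => H i ω)) j} := by
        ext ω
        simp only [hB, hp0, Set.mem_setOf_eq]
        constructor
        · rintro ⟨h1, h2⟩ j hj
          have hj' := Finset.mem_Icc.mp hj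
          by_cases hjm : j ≤ m
          · simp only [if_pos hjm]
            exact h1 j (Finset.mem_Icc.mpr ⟨hj'.1, hjm⟩)
          · have : j = m + 1 := by omega
            subst this
            simp only [if_neg hjm]
            exact h2
        · intro h
          constructor
          · intro j hj
            have hj' := Finset.mem_Icc.mp hj
            have := h j (Finset.mem_Icc.mpr ⟨hj'.1, by omega⟩)
            simpa [if_pos hj'.2] using this
          · have := h (m+1) (Finset.mem_Icc.mpr ⟨by omega, le_rfl⟩)
            simpa [show ¬ (m + 1 ≤ m) by omega] using this
      rw [hBfac, aux_factor P H hHmeas hHindep (σ g) (hσmono g) (fun j k => p0 k j) (m+1)]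
      refine Finset.prod_congr rfl ?_
      intro j hj
      have hj' := Finset.mem_Icc.mp hj
      by_cases hjm : j ≤ m
      · have hset : {ω | p0 ((Finset.Ioc (σ g (j-1)) (σ g j)).sup (fun i => H i ω)) j}
            = {ω | (Finset.Ioc (σ g (j-1)) (σ g j)).sup (fun i => H i ω) = x j} := by
          ext ω; simp [hp0, hjm]
        have hxj := Finset.mem_Icc.mp (hx j (Finset.mem_Icc.mpr ⟨hj'.1, hjm⟩))
        rw [if_pos hjm]
        rw [hset]
        rw [aux_sup_eq_prob P H hHindep hHmeas hHident (σ g (j-1)) (σ g j) (x j) hxj.1]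
        rw [hσdiff g j hj'.1, hq]
      · have hj1 : j = m + 1 := by omega
        subst hj1
        have hset : {ω | p0 ((Finset.Ioc (σ g ((m+1)-1)) (σ g (m+1))).sup (fun i => H i ω)) (m+1)}
            = {ω | T < (Finset.Ioc (σ g m) (σ g (m+1))).sup (fun i => H i ω)} := by
          ext ω; simp [hp0, hjm]
        rw [if_neg hjm]
        rw [hset]
        rw [aux_sup_gt_prob P H hHindep hHmeas hHident (σ g m) (σ g (m+1)) T]
        have hd := hσdiff g (m+1) (by omega)
        rw [show (m+1) - 1 = m from rfl] at hd
        rw [hd, hr]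
    rw [hsplit, hPA, hPB, ← Finset.prod_mul_distrib]
    refine Finset.prod_congr rfl fun j _ => ?_
    rw [hf, mul_comm]
  simp only [hterm]
  -- reindex products over Fin (m+1)
  set f' : Fin (m+1) → ℕ → ENNReal := fun j k => f ((j : ℕ) + 1) k with hf'
  have hreidx : ∀ g : Fin (m+1) → ℕ,
      ∏ j ∈ Finset.Icc 1 (m+1), f j (gh g j) = ∏ j : Fin (m+1), f' j (g j) := by
    intro g
    calc ∏ j ∈ Finset.Icc 1 (m+1), f j (gh g j)
        = ∏ i ∈ Finset.range (m+1), f (1 + i) (gh g (1 + i)) := by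
          rw [← Finset.Ico_add_one_right_eq_Icc, Finset.prod_Ico_eq_prod_range]
          norm_num
      _ = ∏ j : Fin (m+1), f (1 + (j : ℕ)) (gh g (1 + (j : ℕ))) :=
          (Fin.prod_univ_eq_prod_range _ (m+1)).symm
      _ = ∏ j : Fin (m+1), f' j (g j) := by
          refine Finset.prod_congr rfl fun j _ => ?_
          rw [hf', add_comm 1 (j : ℕ), hghfin g j]
  simp only [hreidx]
  rw [aux_tsum_pi_s5 (m+1) f']
  have hM1eq : ∀ t, 1 ≤ t → P {ω | M 1 ω = t} = ∑' k, γ k * q k t := by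
    intro t ht
    rw [aux_M1 P H hHmeas G hGmeas hHG S hS M hM (fun v => v = t)]
    refine tsum_congr fun k => ?_
    rw [aux_sup_eq_prob P H hHindep hHmeas hHident 0 k t ht]
    simp only [Nat.sub_zero, hq, hγ, hF]
    exact mul_comm _ _
  have hM1gt : P {ω | T < M 1 ω} = ∑' k, γ k * r k := by
    rw [aux_M1 P H hHmeas G hGmeas hHG S hS M hM (fun v => T < v)]
    refine tsum_congr fun k => ?_
    rw [aux_sup_gt_prob P H hHindep hHmeas hHident 0 k T]
    simp only [Nat.sub_zero, hr, hγ, hF]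
    exact mul_comm _ _
  have hsum : ∀ j : Fin (m+1), ∑' k, f' j k
      = if (j:ℕ) + 1 ≤ m then P {ω | M 1 ω = x ((j:ℕ)+1)} else P {ω | T < M 1 ω} := by
    intro j
    by_cases hc : (j:ℕ) + 1 ≤ m
    · rw [if_pos hc]
      have hx1 : 1 ≤ x ((j:ℕ)+1) :=
        (Finset.mem_Icc.mp (hx _ (Finset.mem_Icc.mpr ⟨by omega, hc⟩))).1
      rw [hM1eq _ hx1]
      refine tsum_congr fun k => ?_
      simp only [hf', hf, if_pos hc]
    · rw [if_neg hc, hM1gt]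
      refine tsum_congr fun k => ?_
      simp only [hf', hf, if_neg hc]
  simp only [hsum]
  rw [Fin.prod_univ_eq_prod_range
    (fun i => if i + 1 ≤ m then P {ω | M 1 ω = x (i+1)} else P {ω | T < M 1 ω}) (m+1)]
  rw [Finset.prod_range_succ, if_neg (by omega : ¬ (m + 1 ≤ m))]
  have hifpos : ∀ i ∈ Finset.range m,
      (if i + 1 ≤ m then P {ω | M 1 ω = x (i+1)} else P {ω | T < M 1 ω})
        = P {ω | M 1 ω = x (i+1)} := by
    intro i hi
    exact if_pos (by have := Finset.mem_range.mp hi; omega)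
  rw [Finset.prod_congr rfl hifpos, mul_comm]
  congr 1
  rw [← Finset.Ico_add_one_right_eq_Icc, Finset.prod_Ico_eq_prod_range]
  norm_num
  exact Finset.prod_congr rfl fun i _ => by rw [add_comm]
end

section
/- Let δ ∈ (0,1) and let m ≥ k ≥ 1 be integers. For N geometric on {1,2,…} with ℙ(N = n) = δ(1−δ)^{n−1}, let I = (I_0,…,I_{N−1}) be, conditionally on N, a uniformly random 0-1 vector with exactly k ones when N ≥ k; and for y ∈ (0,1) let J(y) = (J_0(y),…,J_{N−1}(y)) be i.i.d. Bernoulli(y) marks with K := Σ J_i(y). Then for every vector i = (i_0,…,i_{m−1}) ∈ {0,1}^m with i_0 + ⋯ + i_{m−1} = k: ℙ(N = m, I = i | N ≥ k) = ∫_0^1 μ_k(y) · [ δ(1−δ)^{m−1} y^k (1−y)^{m−k} / (δ(1−δ)^{k−1} y^k / (1−(1−δ)(1−y))^{k+1}) ] dy, where μ_k(y) := kδ y^{k−1}/(1−(1−δ)(1−y))^{k+1}. Concretely, both sides equal δ(1−δ)^{m−k} / C(m,k), using ℙ(N ≥ k) = (1−δ)^{k−1} and ℙ(N = m, I = i) =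 δ(1−δ)^{m−1}/C(m,k). -/
open MeasureTheory ProbabilityTheory

private lemma prod_fact (a : ℕ) : ∀ b : ℕ,
    (∏ j ∈ Finset.range (b + 1), (a + 1 + j)) * a.factorial = (a + b + 1).factorial := by
  intro b
  induction b with
  | zero => simp [Nat.factorial_succ, mul_comm]
  | succ b ih =>
    have h : a + (b + 1) + 1 = (a + b + 1) + 1 := by ring
    rw [Finset.prod_range_succ, h, Nat.factorial_succ, ← ih]
    ring

private lemma beta_nat (a b : ℕ) :
    (∫ x in Set.Ioo (0:ℝ) 1, x ^ a * (1 - x) ^ b)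
      = (a.factorial * b.factorial : ℝ) / (a + b + 1).factorial := by
  have key : Complex.betaIntegral (a + 1) (b + 1)
      = ((∫ x in (0:ℝ)..1, x ^ a * (1 - x) ^ b : ℝ) : ℂ) := by
    rw [Complex.betaIntegral, ← intervalIntegral.integral_ofReal]
    refine intervalIntegral.integral_congr fun x _ => ?_
    have h1 : ((a:ℂ) + 1 - 1) = ((a : ℕ) : ℂ) := by ring
    have h2 : ((b:ℂ) + 1 - 1) = ((b : ℕ) : ℂ) := by ring
    rw [h1, h2, Complex.cpow_natCast, Complex.cpow_natCast]
    push_cast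
    ring
  have heval : Complex.betaIntegral (a + 1) (b + 1)
      = ((a.factorial * b.factorial : ℝ) / (a + b + 1).factorial : ℝ) := by
    rw [Complex.betaIntegral_eval_nat_add_one_right (by simp; positivity) b]
    have hprod : (∏ j ∈ Finset.range (b + 1), ((a : ℂ) + 1 + j))
        = ((∏ j ∈ Finset.range (b + 1), (a + 1 + j) : ℕ) : ℂ) := by
      push_cast; ring_nf
    rw [hprod]
    have hfacC : ((∏ j ∈ Finset.range (b + 1), (a + 1 + j) : ℕ) : ℂ) * (a.factorial : ℂ)
        = (((a + b + 1).factorial : ℕ) : ℂ) := by exact_mod_cast congrArg Nat.cast (prod_fact a b)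
    have hne : ((∏ j ∈ Finset.range (b + 1), (a + 1 + j) : ℕ) : ℂ) ≠ 0 := by
      have : 0 < ∏ j ∈ Finset.range (b + 1), (a + 1 + j) :=
        Finset.prod_pos fun i _ => by omega
      exact_mod_cast this.ne'
    have hane : ((a.factorial : ℕ) : ℂ) ≠ 0 := by exact_mod_cast a.factorial_ne_zero
    push_cast at hfacC hne ⊢
    rw [← hfacC, mul_comm (∏ j ∈ Finset.range (b + 1), ((a:ℂ) + 1 + (j:ℂ))) ((a.factorial : ℂ)),
      mul_div_mul_left _ _ hane]
  have h3 : (∫ x in (0:ℝ)..1, x ^ a * (1 - x) ^ b)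
      = (a.factorial * b.factorial : ℝ) / (a + b + 1).factorial := by
    have := key.symm.trans heval
    exact_mod_cast this
  rw [← h3, intervalIntegral.integral_of_le zero_le_one, integral_Ioc_eq_integral_Ioo]

/-- equality of the uniform `k`-sampling scheme and the mixed Bernoulli
sampling scheme. With `N` geometric(δ) and, conditionally on `N`, `I` a uniformly random
0-1 vector with exactly `k` ones (when `N ≥ k`), for every 0-1 vector `i` of length `m`
with `k` ones: `ℙ(N = m, I = i | N ≥ k)` equals the `μ_k`-mixture over `y` of the
corresponding Bernoulli quantity; concretely both sides equal `δ(1-δ)^{m-k}/C(m,k)`. -/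
theorem stmt_12
    {Ω : Type*} [MeasurableSpace Ω] (P : Measure Ω) [IsProbabilityMeasure P]
    (δ : ℝ) (hδ : δ ∈ Set.Ioo (0 : ℝ) 1)
    (k m : ℕ) (hk : 1 ≤ k) (hkm : k ≤ m)
    (N : Ω → ℕ) (hNpos : ∀ ω, 1 ≤ N ω)
    (hN : ∀ n : ℕ, 1 ≤ n → (P {ω | N ω = n}).toReal = δ * (1 - δ) ^ (n - 1))
    (II : ℕ → Ω → ℕ) (hII01 : ∀ t ω, II t ω ≤ 1)
    (hunif : ∀ n : ℕ, k ≤ n → ∀ jv : ℕ → ℕ, (∀ t < n, jv t ≤ 1) →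
      (∑ t ∈ Finset.range n, jv t) = k →
      (P {ω | N ω = n ∧ ∀ t < n, II t ω = jv t}).toReal
        = (P {ω | N ω = n}).toReal / (n.choose k : ℝ))
    (iv : ℕ → ℕ) (hiv01 : ∀ t < m, iv t ≤ 1) (hivsum : (∑ t ∈ Finset.range m, iv t) = k) :
    ((P[|{ω | k ≤ N ω}]) {ω | N ω = m ∧ ∀ t < m, II t ω = iv t}).toReal
        = (∫ y in Set.Ioo (0 : ℝ) 1,
            ((k : ℝ) * δ * y ^ (k - 1) / (1 - (1 - δ) * (1 - y)) ^ (k + 1)) *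
              (δ * (1 - δ) ^ (m - 1) * y ^ k * (1 - y) ^ (m - k)
                / (δ * (1 - δ) ^ (k - 1) * y ^ k / (1 - (1 - δ) * (1 - y)) ^ (k + 1))))
      ∧ (∫ y in Set.Ioo (0 : ℝ) 1,
            ((k : ℝ) * δ * y ^ (k - 1) / (1 - (1 - δ) * (1 - y)) ^ (k + 1)) *
              (δ * (1 - δ) ^ (m - 1) * y ^ k * (1 - y) ^ (m - k)
                / (δ * (1 - δ) ^ (k - 1) * y ^ k / (1 - (1 - δ) * (1 - y)) ^ (k + 1))))
          = δ * (1 - δ) ^ (m - k) / (m.choose k : ℝ) := by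
  obtain ⟨hδ0, hδ1⟩ := hδ
  set q : ℝ := 1 - δ with hqdef
  have hq0 : 0 < q := by simp [hqdef]; linarith
  have hq1 : q < 1 := by simp [hqdef]; linarith
  set A := {ω | N ω = m ∧ ∀ t < m, II t ω = iv t} with hA
  set B := {ω | k ≤ N ω} with hB
  -- Step 1: the integral equals δ q^(m-k)/C(m,k)
  have hchoose_ne : (m.choose k : ℝ) ≠ 0 :=
    Nat.cast_ne_zero.mpr (Nat.choose_pos hkm).ne'
  have hint : (∫ y in Set.Ioo (0 : ℝ) 1,
            ((k : ℝ) * δ * y ^ (k - 1) / (1 - (1 - δ) * (1 - y)) ^ (k + 1)) *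
              (δ * (1 - δ) ^ (m - 1) * y ^ k * (1 - y) ^ (m - k)
                / (δ * (1 - δ) ^ (k - 1) * y ^ k / (1 - (1 - δ) * (1 - y)) ^ (k + 1))))
          = δ * (1 - δ) ^ (m - k) / (m.choose k : ℝ) := by
    have hcongr : ∀ y ∈ Set.Ioo (0:ℝ) 1,
        ((k : ℝ) * δ * y ^ (k - 1) / (1 - (1 - δ) * (1 - y)) ^ (k + 1)) *
              (δ * (1 - δ) ^ (m - 1) * y ^ k * (1 - y) ^ (m - k)
                / (δ * (1 - δ) ^ (k - 1) * y ^ k / (1 - (1 - δ) * (1 - y)) ^ (k + 1)))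
          = ((k : ℝ) * δ * (1 - δ) ^ (m - k)) * (y ^ (k - 1) * (1 - y) ^ (m - k)) := by
      intro y hy
      obtain ⟨hy0, hy1⟩ := hy
      have hD : (0:ℝ) < 1 - (1 - δ) * (1 - y) := by nlinarith
      have hDne : (1 - (1 - δ) * (1 - y)) ^ (k + 1) ≠ 0 := pow_ne_zero _ hD.ne'
      have hyk : y ^ k ≠ 0 := pow_ne_zero _ hy0.ne'
      have hqk : (1 - δ) ^ (k - 1) ≠ 0 := pow_ne_zero _ (by linarith)
      have hm1 : (1 - δ) ^ (m - 1) = (1 - δ) ^ (m - k) * (1 - δ) ^ (k - 1) := by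
        rw [← pow_add]; congr 1; omega
      field_simp
      rw [hm1]
      ring
    rw [setIntegral_congr_fun measurableSet_Ioo hcongr, integral_const_mul]
    have hbeta := beta_nat (k - 1) (m - k)
    have hidx : (k - 1) + (m - k) + 1 = m := by omega
    rw [hidx] at hbeta
    rw [hbeta]
    have hfacN : m.choose k * ((k * (k-1).factorial) * (m-k).factorial) = m.factorial := by
      have h1 : k * (k-1).factorial = k.factorial := by
        cases k with
        | zero => omega
        | succ n => simp [Nat.factorial_succ, mul_comm]
      rw [h1, ← Nat.choose_mul_factorial_mul_factorial hkm, mul_assoc]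
    have hfac : (m.choose k : ℝ) * (((k:ℝ) * (k-1).factorial) * (m-k).factorial)
        = m.factorial := by exact_mod_cast hfacN
    have hmfac : (m.factorial : ℝ) ≠ 0 := by exact_mod_cast m.factorial_ne_zero
    field_simp
    linear_combination hfac
  refine ⟨?_, hint⟩
  rw [hint]
  -- Step 2: P A
  have hPA : (P A).toReal = δ * q ^ (m - 1) / (m.choose k : ℝ) := by
    rw [hA, hunif m hkm iv hiv01 hivsum, hN m (le_trans hk hkm)]
  -- Step 3: P B = q^(k-1)
  have hBfin : P B ≠ ⊤ := measure_ne_top P B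
  have hqknn : (0:ℝ) ≤ q ^ (k - 1) := le_of_lt (pow_pos hq0 _)
  have hupper : (P B).toReal ≤ q ^ (k - 1) := by
    have hsub : B ⊆ ⋃ j : ℕ, {ω | N ω = k + j} := fun ω hω => by
      have hω' : k ≤ N ω := hω
      exact Set.mem_iUnion.2 ⟨N ω - k, by simp only [Set.mem_setOf_eq]; omega⟩
    have hle : P B ≤ ∑' j : ℕ, P {ω | N ω = k + j} :=
      (measure_mono hsub).trans (measure_iUnion_le _)
    have hterm : ∀ j : ℕ, P {ω | N ω = k + j} = ENNReal.ofReal (δ * q ^ (k - 1) * q ^ j) := by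
      intro j
      rw [← ENNReal.ofReal_toReal (measure_ne_top P _), hN (k + j) (by omega)]
      congr 1
      rw [show k + j - 1 = (k - 1) + j from by omega, pow_add, hqdef]
      ring
    have hsummable : Summable (fun j : ℕ => δ * q ^ (k - 1) * q ^ j) :=
      (summable_geometric_of_lt_one hq0.le hq1).mul_left _
    have htsum : (∑' j : ℕ, P {ω | N ω = k + j})
        = ENNReal.ofReal (q ^ (k - 1)) := by
      simp_rw [hterm]
      rw [← ENNReal.ofReal_tsum_of_nonneg (fun j => by positivity) hsummable]
      congr 1
      rw [tsum_mul_left, tsum_geometric_of_lt_one hq0.le hq1]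
      have : 1 - q = δ := by simp [hqdef]
      rw [this]
      field_simp
    rw [htsum] at hle
    calc (P B).toReal ≤ (ENNReal.ofReal (q ^ (k - 1))).toReal :=
          ENNReal.toReal_mono (by simp) hle
      _ = q ^ (k - 1) := ENNReal.toReal_ofReal hqknn
  have hlower : q ^ (k - 1) ≤ (P B).toReal := by
    have hcover : (Set.univ : Set Ω) ⊆ B ∪ ⋃ n ∈ Finset.range (k - 1), {ω | N ω = n + 1} := by
      intro ω _
      by_cases h : k ≤ N ω
      · exact Or.inl h
      · have h1 : N ω - 1 ∈ Finset.range (k - 1) :=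
          Finset.mem_range.2 (by have := hNpos ω; omega)
        have h2 : ω ∈ {ω' | N ω' = (N ω - 1) + 1} := by
          simp only [Set.mem_setOf_eq]; have := hNpos ω; omega
        exact Or.inr (Set.mem_biUnion h1 h2)
    have hterm : ∀ n : ℕ, P {ω | N ω = n + 1} = ENNReal.ofReal (δ * q ^ n) := by
      intro n
      rw [← ENNReal.ofReal_toReal (measure_ne_top P _), hN (n + 1) (by omega)]
      simp [hqdef]
    have hsum : (∑ n ∈ Finset.range (k - 1), P {ω | N ω = n + 1})
        = ENNReal.ofReal (1 - q ^ (k - 1)) := by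
      simp_rw [hterm]
      rw [← ENNReal.ofReal_sum_of_nonneg (fun i _ => by positivity)]
      congr 1
      rw [← Finset.mul_sum, geom_sum_eq hq1.ne]
      have h2 : q - 1 = -δ := by simp [hqdef]
      rw [h2]
      have hδinv : δ * δ⁻¹ = 1 := mul_inv_cancel₀ hδ0.ne'
      field_simp
      linear_combination
    have h1 : (1 : ENNReal) ≤ P B + ENNReal.ofReal (1 - q ^ (k - 1)) := by
      calc (1 : ENNReal) = P Set.univ := (measure_univ).symm
        _ ≤ P (B ∪ ⋃ n ∈ Finset.range (k - 1), {ω | N ω = n + 1}) := measure_mono hcover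
        _ ≤ P B + P (⋃ n ∈ Finset.range (k - 1), {ω | N ω = n + 1}) := measure_union_le _ _
        _ ≤ P B + ∑ n ∈ Finset.range (k - 1), P {ω | N ω = n + 1} :=
            add_le_add_right (measure_biUnion_finset_le _ _) _
        _ = P B + ENNReal.ofReal (1 - q ^ (k - 1)) := by rw [hsum]
    have hfin : P B + ENNReal.ofReal (1 - q ^ (k - 1)) ≠ ⊤ := by
      simp [hBfin]
    have := ENNReal.toReal_mono hfin h1
    rw [ENNReal.toReal_add hBfin (by simp), ENNReal.toReal_one,
      ENNReal.toReal_ofReal (by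
        have hle1 : q ^ (k - 1) ≤ 1 := pow_le_one₀ hq0.le hq1.le
        linarith)] at this
    linarith
  have hPB : (P B).toReal = q ^ (k - 1) := le_antisymm hupper hlower
  have hPBne0 : P B ≠ 0 := by
    intro h
    rw [h] at hPB
    simp at hPB
    exact (pow_pos hq0 (k - 1)).ne' hPB.symm
  -- Step 4: restrict B A = P A since A ⊆ B
  have hAB : A ∩ B = A := by
    apply Set.inter_eq_self_of_subset_left
    intro ω hω
    have h1 : N ω = m := hω.1
    show k ≤ N ω
    omega
  have hrestr : P.restrict B A = P A := by
    refine le_antisymm (Measure.restrict_le_self A) ?_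
    calc P A = P (A ∩ B) := by rw [hAB]
      _ ≤ P.restrict B A := Measure.le_restrict_apply _ _
  have hcond : ((P[|B]) A).toReal = (P A).toReal / (P B).toReal := by
    rw [ProbabilityTheory.cond, Measure.smul_apply, smul_eq_mul, hrestr,
      ENNReal.toReal_mul, ENNReal.toReal_inv]
    ring
  rw [hcond, hPA, hPB]
  have hm1 : q ^ (m - 1) = q ^ (m - k) * q ^ (k - 1) := by
    rw [← pow_add]; congr 1; omega
  have hqk_ne : q ^ (k - 1) ≠ 0 := (pow_pos hq0 _).ne'
  rw [hm1]
  field_simp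
  ring
end
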